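/- Let C(G) be the directed cone over a directed graph G, obtained by adding a new vertex ⋆ and directed edges (x,⋆) for every vertex x of G. Then EMH_{0,0}(C(G)) ≅ EMH_{0,0}(G) ⊕ ℤ, and for all (k,ℓ) ≠ (0,0), EMH_{k,ℓ}(C(G)) ≅ EMH_{k,ℓ}(G) ⊕ EMH_{k-1,ℓ-1}(G). -/

import Mathlib

open scoped Classical

/-- Reachability in a directed graph given by its adjacency relation. -/
def dreach {V : Type} (A : V → V → Prop) : V → V → Prop :=
  Relation.ReflTransGen A

/-- Directed distance: minimal length of a directed path from `x` to `y`. -/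
noncomputable def ddist {V : Type} (A : V → V → Prop) (x y : V) : ℕ :=
  sInf {n | ∃ p : Fin (n + 1) → V, p 0 = x ∧ p (Fin.last n) = y ∧
    ∀ i : Fin n, A (p i.castSucc) (p i.succ)}

/-- Length of a tuple of vertices: sum of consecutive directed distances. -/
noncomputable def dlen {V : Type} (A : V → V → Prop) {k : ℕ} (x : Fin (k + 1) → V) : ℕ :=
  ∑ i : Fin k, ddist A (x i.castSucc) (x i.succ)

/-- Generators of the (k,ℓ) eulerian magnitude chain group of a directed graph:
tuples of k+1 pairwise distinct vertices, each reachable from the previous one,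
of total length ℓ. -/
def demcGen {V : Type} (A : V → V → Prop) (k ℓ : ℕ) : Set (Fin (k + 1) → V) :=
  {x | Function.Injective x ∧ (∀ i : Fin k, dreach A (x i.castSucc) (x i.succ)) ∧
    dlen A x = ℓ}

/-- The (k,ℓ) eulerian magnitude chain group of a directed graph. -/
abbrev dEMC {V : Type} (A : V → V → Prop) (k ℓ : ℕ) : Type :=
  demcGen A k ℓ →₀ ℤ

/-- The `i`-th face: delete the `i`-th vertex if the result is again a generator,
and `0` otherwise. -/
noncomputable def demcFace {V : Type} (A : V → V → Prop) (k ℓ : ℕ) (i : Fin (k + 2))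
    (x : demcGen A (k + 1) ℓ) : dEMC A k ℓ :=
  if h : ((x : Fin (k + 2) → V) ∘ i.succAbove) ∈ demcGen A k ℓ then
    Finsupp.single ⟨_, h⟩ 1 else 0

/-- The eulerian magnitude differential: alternating sum of interior-vertex deletions. -/
noncomputable def demcD {V : Type} (A : V → V → Prop) (k ℓ : ℕ) :
    dEMC A (k + 1) ℓ →ₗ[ℤ] dEMC A k ℓ :=
  Finsupp.lift (dEMC A k ℓ) ℤ (demcGen A (k + 1) ℓ) fun x =>
    ∑ i : Fin (k + 2),
      if i = 0 ∨ i = Fin.last (k + 1) then 0 else ((-1 : ℤ) ^ (i : ℕ)) • demcFace A k ℓ i x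

/-- Cycles of the eulerian magnitude chain complex in degree `k`. -/
noncomputable def demcCycles {V : Type} (A : V → V → Prop) (k ℓ : ℕ) :
    Submodule ℤ (dEMC A k ℓ) :=
  match k with
  | 0 => ⊤
  | k + 1 => LinearMap.ker (demcD A k ℓ)

/-- Eulerian magnitude homology of a directed graph in bidegree (k,ℓ). -/
noncomputable abbrev dEMH {V : Type} (A : V → V → Prop) (k ℓ : ℕ) :=
  demcCycles A k ℓ ⧸
    Submodule.comap (demcCycles A k ℓ).subtype (LinearMap.range (demcD A k ℓ))

/-- The directed cone over a directed graph: a new vertex `⋆ = none` is added, together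
with a directed edge `(x,⋆)` for every vertex `x` of `G`. -/
def coneGraph {V : Type} (A : V → V → Prop) : Option V → Option V → Prop
  | some x, some y => A x y
  | some _, none => True
  | none, _ => False

section Basic
variable {V : Type} {A : V → V → Prop}

/-- the path set defining ddist -/
def pset (A : V → V → Prop) (x y : V) : Set ℕ :=
  {n | ∃ p : Fin (n + 1) → V, p 0 = x ∧ p (Fin.last n) = y ∧
    ∀ i : Fin n, A (p i.castSucc) (p i.succ)}

lemma ddist_eq (x y : V) : ddist A x y = sInf (pset A x y) := rfl

lemma zero_mem_pset_iff {x y : V} : 0 ∈ pset A x y ↔ x = y := by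
  constructor
  · rintro ⟨p, h0, hl, -⟩
    rw [← h0, ← hl]; rfl
  · rintro rfl
    exact ⟨fun _ => x, rfl, rfl, fun i => i.elim0⟩

lemma pset_nonempty {x y : V} (h : dreach A x y) : (pset A x y).Nonempty := by
  induction h with
  | refl => exact ⟨0, zero_mem_pset_iff.2 rfl⟩
  | @tail b c hab hbc ih =>
    obtain ⟨n, p, h0, hl, hs⟩ := ih
    refine ⟨n + 1, Fin.snoc p c, ?_, ?_, ?_⟩
    · rw [show (0 : Fin (n+2)) = Fin.castSucc 0 by rfl, Fin.snoc_castSucc]; exact h0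
    · simp
    · intro i
      refine Fin.lastCases ?_ (fun j => ?_) i
      · rw [Fin.succ_last, Fin.snoc_last,
          show (Fin.last n).castSucc = Fin.castSucc (Fin.last n) from rfl, Fin.snoc_castSucc, hl]
        exact hbc
      · rw [show (Fin.castSucc j).castSucc = Fin.castSucc j.castSucc from rfl,
          Fin.succ_castSucc, Fin.snoc_castSucc, Fin.snoc_castSucc]
        exact hs j

lemma one_le_ddist {x y : V} (h : dreach A x y) (hne : x ≠ y) : 1 ≤ ddist A x y := by
  rw [Nat.one_le_iff_ne_zero]
  intro h0
  have hmem := Nat.sInf_mem (pset_nonempty h)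
  rw [← ddist_eq, h0] at hmem
  exact hne (zero_mem_pset_iff.1 hmem)

lemma ddist_le_of_mem {x y : V} {n : ℕ} (h : n ∈ pset A x y) : ddist A x y ≤ n :=
  Nat.sInf_le h

end Basic

section Cone
variable {V : Type} {A : V → V → Prop}

lemma cone_reach_none_eq {z : Option V} (h : dreach (coneGraph A) none z) : z = none := by
  induction h with
  | refl => rfl
  | @tail b c hab hbc ih => subst ih; exact absurd hbc (by simp [coneGraph])

lemma cone_step_some {b : Option V} {y : V} (h : coneGraph A b (some y)) :
    ∃ b', b = some b' ∧ A b' y := by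
  cases b with
  | none => exact absurd h (by simp [coneGraph])
  | some b' => exact ⟨b', rfl, h⟩

lemma cone_reach_some {x y : V} :
    dreach (coneGraph A) (some x) (some y) ↔ dreach A x y := by
  constructor
  · intro h
    have key : ∀ z : Option V, dreach (coneGraph A) (some x) z →
        ∀ y', z = some y' → dreach A x y' := by
      intro z hz
      induction hz with
      | refl =>
        intro y' hy'
        obtain rfl : x = y' := Option.some_injective _ hy'
        exact Relation.ReflTransGen.refl
      | @tail b c hab hbc ih =>
        rintro y' rfl
        obtain ⟨b', rfl, hA⟩ := cone_step_some hbc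
        exact (ih b' rfl).tail hA
    exact key _ h y rfl
  · intro h
    induction h with
    | refl => exact Relation.ReflTransGen.refl
    | @tail b c hab hbc ih => exact ih.tail hbc

lemma cone_reach_snoc_none (x : V) : dreach (coneGraph A) (some x) none :=
  Relation.ReflTransGen.single trivial

lemma cone_pset_some {x y : V} {n : ℕ} :
    n ∈ pset (coneGraph A) (some x) (some y) ↔ n ∈ pset A x y := by
  constructor
  · rintro ⟨p, h0, hl, hs⟩
    have hns : ∀ i : Fin (n+1), p i ≠ none := by
      intro i hi
      rcases eq_or_ne i (Fin.last n) with rfl | hne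
      · rw [hl] at hi; exact Option.some_ne_none _ hi
      · obtain ⟨j, rfl⟩ := Fin.exists_castSucc_eq.2 hne
        have := hs j
        rw [hi] at this
        exact this.elim
    have hsome : ∀ i, (p i).isSome := fun i => Option.ne_none_iff_isSome.1 (hns i)
    refine ⟨fun i => (p i).get (hsome i), ?_, ?_, ?_⟩
    · have := h0; apply Option.some_injective; rw [Option.some_get]; exact this
    · apply Option.some_injective; rw [Option.some_get]; exact hl
    · intro i
      have := hs i
      rwa [← Option.some_get (hsome i.castSucc), ← Option.some_get (hsome i.succ)] at this
  · rintro ⟨p, h0, hl, hs⟩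
    exact ⟨fun i => some (p i), by simp [h0], by simp [hl], fun i => hs i⟩

lemma cone_ddist_some (x y : V) : ddist (coneGraph A) (some x) (some y) = ddist A x y := by
  rw [ddist_eq, ddist_eq]
  congr 1
  ext n
  exact cone_pset_some

lemma cone_ddist_none (x : V) : ddist (coneGraph A) (some x) none = 1 := by
  have h1 : 1 ∈ pset (coneGraph A) (some x) none := by
    refine ⟨fun i => if i = 0 then some x else none, by simp, by simp [Fin.last], ?_⟩
    intro i
    have hi : i = 0 := Subsingleton.elim _ _
    subst hi
    show coneGraph A (if _ then _ else _) (if _ then _ else _)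
    norm_num
    show coneGraph A (some x) none
    trivial
  have h0 : (0 : ℕ) ∉ pset (coneGraph A) (some x) none := by
    intro h
    exact Option.some_ne_none _ (zero_mem_pset_iff.1 h)
  have hmem := Nat.sInf_mem ⟨1, h1⟩
  rw [ddist_eq]
  rcases Nat.lt_or_ge (sInf (pset (coneGraph A) (some x) none)) 1 with h | h
  · interval_cases h' : (sInf (pset (coneGraph A) (some x) none)) 
    · exact absurd (h' ▸ hmem) h0
  · exact le_antisymm (Nat.sInf_le h1) h

end Cone

section Snoc
variable {V : Type} {A : V → V → Prop}

lemma snoc_comp_succAbove {α : Type*} {n : ℕ} (P : Fin (n + 1) → α) (a : α) (i : Fin (n + 1)) :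
    (Fin.snoc P a : Fin (n + 2) → α) ∘ (Fin.castSucc i).succAbove =
      Fin.snoc (P ∘ i.succAbove) a := by
  funext j
  refine Fin.lastCases ?_ (fun j' => ?_) j
  · have h1 : (Fin.castSucc i).succAbove (Fin.last n) = Fin.last (n + 1) := by
      rw [Fin.succAbove_of_le_castSucc _ _ (Fin.castSucc_le_castSucc_iff.2 (Fin.le_last i)),
        Fin.succ_last]
    show (Fin.snoc P a : Fin (n + 2) → α) ((Fin.castSucc i).succAbove (Fin.last n)) = _
    rw [h1, Fin.snoc_last, Fin.snoc_last]
  · show (Fin.snoc P a : Fin (n + 2) → α) ((Fin.castSucc i).succAbove (Fin.castSucc j')) = _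
    rcases lt_or_ge (Fin.castSucc j') i with h | h
    · rw [Fin.succAbove_castSucc_of_lt i (Fin.castSucc j') h, Fin.snoc_castSucc,
        Fin.snoc_castSucc]
      show P (Fin.castSucc j') = P (i.succAbove j')
      rw [Fin.succAbove_of_castSucc_lt i j' h]
    · rw [Fin.succAbove_castSucc_of_le i (Fin.castSucc j') h, Fin.succ_castSucc,
        Fin.snoc_castSucc, Fin.snoc_castSucc]
      show P (Fin.succ j') = P (i.succAbove j')
      rw [Fin.succAbove_of_le_castSucc i j' h]

lemma dlen_some (k : ℕ) (y : Fin (k + 1) → V) :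
    dlen (coneGraph A) (fun i => some (y i)) = dlen A y := by
  unfold dlen
  exact Finset.sum_congr rfl fun i _ => cone_ddist_some _ _

lemma dlen_snoc (k : ℕ) (y : Fin (k + 1) → V) :
    dlen (coneGraph A) (Fin.snoc (fun i => some (y i)) none : Fin (k + 2) → Option V) =
      dlen A y + 1 := by
  unfold dlen
  rw [Fin.sum_univ_castSucc]
  congr 1
  · refine Finset.sum_congr rfl fun i _ => ?_
    rw [show (Fin.castSucc i).castSucc = Fin.castSucc i.castSucc from rfl, Fin.succ_castSucc,
      Fin.snoc_castSucc, Fin.snoc_castSucc]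
    exact cone_ddist_some _ _
  · rw [Fin.succ_last, Fin.snoc_last,
      show (Fin.last k).castSucc = Fin.castSucc (Fin.last k) from rfl, Fin.snoc_castSucc]
    exact cone_ddist_none _

lemma mem_some_iff {k ℓ : ℕ} (y : Fin (k + 1) → V) :
    (fun i => some (y i)) ∈ demcGen (coneGraph A) k ℓ ↔ y ∈ demcGen A k ℓ := by
  constructor
  · rintro ⟨hinj, hreach, hlen⟩
    refine ⟨fun a b hab => hinj (by simp [hab]), fun i => cone_reach_some.1 (hreach i), ?_⟩
    rwa [dlen_some] at hlen
  · rintro ⟨hinj, hreach, hlen⟩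
    refine ⟨fun a b hab => hinj (Option.some_injective _ hab), fun i => cone_reach_some.2 (hreach i), ?_⟩
    rwa [dlen_some]

lemma mem_snoc_iff {k ℓ : ℕ} (y : Fin (k + 1) → V) :
    (Fin.snoc (fun i => some (y i)) none : Fin (k + 2) → Option V) ∈
      demcGen (coneGraph A) (k + 1) (ℓ + 1) ↔ y ∈ demcGen A k ℓ := by
  have hsc : ∀ i : Fin (k + 1),
      (Fin.snoc (fun i => some (y i)) none : Fin (k + 2) → Option V) (Fin.castSucc i)
        = some (y i) := fun i => Fin.snoc_castSucc _ _ _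
  have hsl : (Fin.snoc (fun i => some (y i)) none : Fin (k + 2) → Option V) (Fin.last (k + 1))
      = none := Fin.snoc_last _ _
  constructor
  · rintro ⟨hinj, hreach, hlen⟩
    refine ⟨?_, ?_, ?_⟩
    · intro a b hab
      have h3 : (Fin.snoc (fun i => some (y i)) none : Fin (k + 2) → Option V) a.castSucc =
          (Fin.snoc (fun i => some (y i)) none : Fin (k + 2) → Option V) b.castSucc := by
        rw [hsc, hsc, hab]
      exact Fin.castSucc_injective _ (hinj h3)
    · intro i
      have := hreach (Fin.castSucc i)
      rw [show (Fin.castSucc i).castSucc = Fin.castSucc i.castSucc from rfl, Fin.succ_castSucc,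
        hsc, hsc] at this
      exact cone_reach_some.1 this
    · have := hlen
      rw [dlen_snoc] at this
      omega
  · rintro ⟨hinj, hreach, hlen⟩
    refine ⟨?_, ?_, ?_⟩
    · intro a b hab
      rcases Fin.eq_castSucc_or_eq_last a with ⟨a', rfl⟩ | rfl <;>
        rcases Fin.eq_castSucc_or_eq_last b with ⟨b', rfl⟩ | rfl
      · rw [hsc, hsc] at hab
        exact congrArg Fin.castSucc (hinj (Option.some_injective _ hab))
      · rw [hsc, hsl] at hab; exact absurd hab (Option.some_ne_none _)
      · rw [hsl, hsc] at hab; exact absurd hab.symm (Option.some_ne_none _)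
      · rfl
    · intro i
      refine Fin.lastCases ?_ (fun i' => ?_) i
      · rw [Fin.succ_last, hsl, show (Fin.last k).castSucc = Fin.castSucc (Fin.last k) from rfl,
          hsc]
        exact cone_reach_snoc_none _
      · rw [show (Fin.castSucc i').castSucc = Fin.castSucc i'.castSucc from rfl,
          Fin.succ_castSucc, hsc, hsc]
        exact cone_reach_some.2 (hreach i')
    · rw [dlen_snoc, hlen]

end Snoc

section Gens
variable {V : Type} {A : V → V → Prop}

lemma none_at_last {k ℓ : ℕ} {x : Fin (k + 1) → Option V}
    (hx : x ∈ demcGen (coneGraph A) k ℓ) {i : Fin (k + 1)} (h : x i = none) :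
    i = Fin.last k := by
  by_contra hne
  obtain ⟨j, rfl⟩ := Fin.exists_castSucc_eq.2 hne
  have hr := hx.2.1 j
  rw [h] at hr
  have := cone_reach_none_eq hr
  have := hx.1 (h.trans this.symm)
  exact absurd this (by
    intro hh
    exact absurd (congrArg Fin.val hh) (by simp))

lemma demcD_single {k ℓ : ℕ} (x : demcGen A (k + 1) ℓ) :
    demcD A k ℓ (Finsupp.single x 1) =
      ∑ i : Fin (k + 2),
        if i = 0 ∨ i = Fin.last (k + 1) then 0
        else ((-1 : ℤ) ^ (i : ℕ)) • demcFace A k ℓ i x := by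
  rw [demcD, Finsupp.lift_apply, Finsupp.sum_single_index (by simp), one_smul]

/-- canonical inclusion of generators -/
def toCone (A : V → V → Prop) (k ℓ : ℕ) (y : demcGen A k ℓ) :
    demcGen (coneGraph A) k ℓ :=
  ⟨fun i => some (y.1 i), (mem_some_iff _).2 y.2⟩

/-- cone-vertex generators -/
def toConeSnoc (A : V → V → Prop) (k ℓ : ℕ) (y : demcGen A k ℓ) :
    demcGen (coneGraph A) (k + 1) (ℓ + 1) :=
  ⟨Fin.snoc (fun i => some (y.1 i)) none, (mem_snoc_iff _).2 y.2⟩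

lemma genElim_bij (k ℓ : ℕ) :
    Function.Bijective (Sum.elim (toCone A (k + 1) (ℓ + 1)) (toConeSnoc A k ℓ)) := by
  constructor
  · rintro (a | a) (b | b) hab <;>
      simp only [Sum.elim_inl, Sum.elim_inr, toCone, toConeSnoc, Subtype.mk_eq_mk] at hab
    · refine congrArg Sum.inl (Subtype.ext (funext fun i => ?_))
      exact Option.some_injective _ (congrFun hab i)
    · exact absurd (congrFun hab (Fin.last (k + 1))) (by simp)
    · exact absurd (congrFun hab (Fin.last (k + 1))) (by simp)
    · refine congrArg Sum.inr (Subtype.ext (funext fun i => ?_))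
      have := congrFun hab i.castSucc
      rw [Fin.snoc_castSucc, Fin.snoc_castSucc] at this
      exact Option.some_injective _ this
  · rintro ⟨x, hx⟩
    by_cases h : x (Fin.last (k + 1)) = none
    · have hsome : ∀ i : Fin (k + 1), (x i.castSucc).isSome := by
        intro i
        rw [Option.isSome_iff_ne_none]
        intro hn
        have := none_at_last hx hn
        exact absurd this (Fin.ne_last_of_lt (Fin.castSucc_lt_last i))
      set y : Fin (k + 1) → V := fun i => (x i.castSucc).get (hsome i) with hy
      have hxy : x = (Fin.snoc (fun i => some (y i)) none : Fin (k + 2) → Option V) := by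
        funext j
        refine Fin.lastCases ?_ (fun j' => ?_) j
        · rw [Fin.snoc_last, h]
        · rw [Fin.snoc_castSucc, hy]
          exact (Option.some_get (hsome j')).symm
      refine ⟨Sum.inr ⟨y, ?_⟩, ?_⟩
      · exact (mem_snoc_iff y).1 (hxy ▸ hx)
      · simp only [Sum.elim_inr, toConeSnoc]
        exact Subtype.ext hxy.symm
    · have hsome : ∀ i : Fin (k + 2), (x i).isSome := by
        intro i
        rw [Option.isSome_iff_ne_none]
        intro hn
        exact h ((none_at_last hx hn) ▸ hn)
      set y : Fin (k + 2) → V := fun i => (x i).get (hsome i) with hy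
      have hxy : x = fun i => some (y i) := by
        funext j
        rw [hy]
        exact (Option.some_get (hsome j)).symm
      refine ⟨Sum.inl ⟨y, ?_⟩, ?_⟩
      · exact (mem_some_iff y).1 (hxy ▸ hx)
      · simp only [Sum.elim_inl, toCone]
        exact Subtype.ext hxy.symm

noncomputable def genEquiv (A : V → V → Prop) (k ℓ : ℕ) :
    (demcGen A (k + 1) (ℓ + 1)) ⊕ (demcGen A k ℓ) ≃ demcGen (coneGraph A) (k + 1) (ℓ + 1) :=
  Equiv.ofBijective _ (genElim_bij k ℓ)

noncomputable def chainEquiv (A : V → V → Prop) (k ℓ : ℕ) :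
    (dEMC A (k + 1) (ℓ + 1) × dEMC A k ℓ) ≃ₗ[ℤ] dEMC (coneGraph A) (k + 1) (ℓ + 1) :=
  (Finsupp.sumFinsuppLEquivProdFinsupp ℤ).symm ≪≫ₗ
    Finsupp.domLCongr (genEquiv A k ℓ)

lemma sumFinsupp_symm_inl {α β : Type} (a : α) :
    (Finsupp.sumFinsuppLEquivProdFinsupp (M := ℤ) ℤ (α := α) (β := β)).symm
      (Finsupp.single a 1, 0) = Finsupp.single (Sum.inl a) 1 := by
  apply (Finsupp.sumFinsuppLEquivProdFinsupp (M := ℤ) ℤ).injective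
  rw [LinearEquiv.apply_symm_apply]
  refine Prod.ext (Finsupp.ext fun x => ?_) (Finsupp.ext fun x => ?_)
  · rw [Finsupp.fst_sumFinsuppLEquivProdFinsupp]
    rw [Finsupp.single_apply_left Sum.inl_injective]
  · rw [Finsupp.snd_sumFinsuppLEquivProdFinsupp]
    rw [Finsupp.single_eq_of_ne (by simp)]
    rfl

lemma sumFinsupp_symm_inr {α β : Type} (b : β) :
    (Finsupp.sumFinsuppLEquivProdFinsupp (M := ℤ) ℤ (α := α) (β := β)).symm
      (0, Finsupp.single b 1) = Finsupp.single (Sum.inr b) 1 := by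
  apply (Finsupp.sumFinsuppLEquivProdFinsupp (M := ℤ) ℤ).injective
  rw [LinearEquiv.apply_symm_apply]
  refine Prod.ext (Finsupp.ext fun x => ?_) (Finsupp.ext fun x => ?_)
  · rw [Finsupp.fst_sumFinsuppLEquivProdFinsupp]
    rw [Finsupp.single_eq_of_ne (by simp)]
    rfl
  · rw [Finsupp.snd_sumFinsuppLEquivProdFinsupp]
    rw [Finsupp.single_apply_left Sum.inr_injective]

lemma chainEquiv_inl {k ℓ : ℕ} (a : demcGen A (k + 1) (ℓ + 1)) :
    chainEquiv A k ℓ (Finsupp.single a 1, 0) = Finsupp.single (toCone A (k + 1) (ℓ + 1) a) 1 := by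
  rw [chainEquiv, LinearEquiv.trans_apply, sumFinsupp_symm_inl, Finsupp.domLCongr_single]
  rfl

lemma chainEquiv_inr {k ℓ : ℕ} (b : demcGen A k ℓ) :
    chainEquiv A k ℓ (0, Finsupp.single b 1) = Finsupp.single (toConeSnoc A k ℓ b) 1 := by
  rw [chainEquiv, LinearEquiv.trans_apply, sumFinsupp_symm_inr, Finsupp.domLCongr_single]
  rfl

end Gens

section Comm
variable {V : Type} {A : V → V → Prop}

lemma prod_zero_eq {M N : Type} [AddCommGroup M] [AddCommGroup N] : ((0 : M), (0 : N)) = 0 := rfl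

lemma face_toCone {k ℓ : ℕ} (i : Fin (k + 3)) (a : demcGen A (k + 2) (ℓ + 1)) :
    demcFace (coneGraph A) (k + 1) (ℓ + 1) i (toCone A (k + 2) (ℓ + 1) a) =
      chainEquiv A k ℓ (demcFace A (k + 1) (ℓ + 1) i a, 0) := by
  simp only [demcFace]
  by_cases h : ((a : Fin (k + 3) → V) ∘ i.succAbove) ∈ demcGen A (k + 1) (ℓ + 1)
  · rw [dif_pos h,
      dif_pos (show ((toCone A (k + 2) (ℓ + 1) a : Fin (k + 3) → Option V) ∘ i.succAbove) ∈
        demcGen (coneGraph A) (k + 1) (ℓ + 1) from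
        (mem_some_iff ((a : Fin (k + 3) → V) ∘ i.succAbove)).2 h),
      chainEquiv_inl]
    congr 1
  · rw [dif_neg h, dif_neg (show ¬(((toCone A (k + 2) (ℓ + 1) a :
        Fin (k + 3) → Option V) ∘ i.succAbove) ∈ demcGen (coneGraph A) (k + 1) (ℓ + 1)) from
        fun hc => h ((mem_some_iff ((a : Fin (k + 3) → V) ∘ i.succAbove)).1 hc)),
      prod_zero_eq, map_zero]

lemma commL {k ℓ : ℕ} (a : demcGen A (k + 2) (ℓ + 1)) :
    demcD (coneGraph A) (k + 1) (ℓ + 1) (Finsupp.single (toCone A (k + 2) (ℓ + 1) a) 1) =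
      chainEquiv A k ℓ (demcD A (k + 1) (ℓ + 1) (Finsupp.single a 1), 0) := by
  set L : dEMC A (k + 1) (ℓ + 1) →ₗ[ℤ] dEMC (coneGraph A) (k + 1) (ℓ + 1) :=
    (chainEquiv A k ℓ).toLinearMap ∘ₗ LinearMap.inl ℤ _ (dEMC A k ℓ) with hL
  have hLa : ∀ s, chainEquiv A k ℓ (s, 0) = L s := fun s => rfl
  rw [demcD_single, demcD_single, hLa, map_sum]
  refine Finset.sum_congr rfl fun i _ => ?_
  by_cases hc : i = 0 ∨ i = Fin.last (k + 2)
  · rw [if_pos hc, if_pos hc, map_zero]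
  · rw [if_neg hc, if_neg hc, map_smul]
    rw [← hLa, face_toCone]

lemma demcFace_congr {W : Type} {B : W → W → Prop} {k ℓ : ℕ} (x : demcGen B (k + 1) ℓ)
    (i : Fin (k + 2)) (g : Fin (k + 1) → W) (hg : (x : Fin (k + 2) → W) ∘ i.succAbove = g) :
    demcFace B k ℓ i x =
      if h : g ∈ demcGen B k ℓ then Finsupp.single ⟨g, h⟩ 1 else 0 := by
  subst hg; rfl

lemma dlen_decomp {k : ℕ} (b : Fin (k + 2) → V) :
    dlen A b = dlen A (b ∘ Fin.castSucc) +
      ddist A (b (Fin.castSucc (Fin.last k))) (b (Fin.succ (Fin.last k))) := by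
  unfold dlen
  rw [Fin.sum_univ_castSucc]
  congr 1

lemma face_last_zero {k ℓ : ℕ} (b : demcGen A (k + 1) ℓ) :
    demcFace A k ℓ (Fin.last (k + 1)) b = 0 := by
  rw [demcFace_congr b (Fin.last (k + 1)) ((b : Fin (k + 2) → V) ∘ Fin.castSucc)
    (by rw [Fin.succAbove_last])]
  rw [dif_neg]
  intro hmem
  have hd := dlen_decomp (A := A) (b : Fin (k + 2) → V)
  have h1 : 1 ≤ ddist A ((b : Fin (k + 2) → V) (Fin.castSucc (Fin.last k)))
      ((b : Fin (k + 2) → V) (Fin.succ (Fin.last k))) := by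
    refine one_le_ddist (b.2.2.1 (Fin.last k)) fun hcontra => ?_
    have := b.2.1 hcontra
    exact absurd (congrArg Fin.val this) (by simp)
  have h2 : dlen A ((b : Fin (k + 2) → V) ∘ Fin.castSucc) = ℓ := hmem.2.2
  have h3 : dlen A (b : Fin (k + 2) → V) = ℓ := b.2.2.2
  omega

lemma face_toConeSnoc {k ℓ : ℕ} (i : Fin (k + 2)) (b : demcGen A (k + 1) ℓ) :
    demcFace (coneGraph A) (k + 1) (ℓ + 1) (Fin.castSucc i) (toConeSnoc A (k + 1) ℓ b) =
      chainEquiv A k ℓ (0, demcFace A k ℓ i b) := by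
  have hcomp : ((toConeSnoc A (k + 1) ℓ b : Fin (k + 3) → Option V)) ∘
      (Fin.castSucc i).succAbove =
      (Fin.snoc (fun j => some (((b : Fin (k + 2) → V) ∘ i.succAbove) j)) none :
        Fin (k + 2) → Option V) := by
    have := snoc_comp_succAbove (fun j => some ((b : Fin (k + 2) → V) j)) (none : Option V) i
    convert this using 2 <;> rfl
  rw [demcFace_congr _ _ _ hcomp]
  by_cases h : ((b : Fin (k + 2) → V) ∘ i.succAbove) ∈ demcGen A k ℓ
  · rw [dif_pos ((mem_snoc_iff ((b : Fin (k + 2) → V) ∘ i.succAbove)).2 h),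
      demcFace_congr b i _ rfl, dif_pos h, chainEquiv_inr]
    congr 1
  · rw [dif_neg (fun hc => h ((mem_snoc_iff ((b : Fin (k + 2) → V) ∘ i.succAbove)).1 hc)),
      demcFace_congr b i _ rfl, dif_neg h, prod_zero_eq, map_zero]

lemma commR {k ℓ : ℕ} (b : demcGen A (k + 1) ℓ) :
    demcD (coneGraph A) (k + 1) (ℓ + 1) (Finsupp.single (toConeSnoc A (k + 1) ℓ b) 1) =
      chainEquiv A k ℓ (0, demcD A k ℓ (Finsupp.single b 1)) := by
  set R : dEMC A k ℓ →ₗ[ℤ] dEMC (coneGraph A) (k + 1) (ℓ + 1) :=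
    (chainEquiv A k ℓ).toLinearMap ∘ₗ LinearMap.inr ℤ (dEMC A (k + 1) (ℓ + 1)) _ with hR
  have hRa : ∀ s, chainEquiv A k ℓ (0, s) = R s := fun s => rfl
  rw [demcD_single, demcD_single, hRa, map_sum, Fin.sum_univ_castSucc (n := k + 2)]
  rw [if_pos (Or.inr rfl), add_zero]
  refine Finset.sum_congr rfl fun i _ => ?_
  by_cases h0 : i = 0
  · subst h0
    rw [if_pos (Or.inl rfl), if_pos (Or.inl (by rfl)), map_zero]
  have hc0 : ¬(Fin.castSucc i = 0 ∨ Fin.castSucc i = Fin.last (k + 2)) := by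
    push_neg
    exact ⟨fun hcs => h0 (by
      have := congrArg Fin.val hcs
      exact Fin.ext this), (Fin.castSucc_lt_last i).ne⟩
  rw [if_neg hc0]
  by_cases hl : i = Fin.last (k + 1)
  · subst hl
    rw [if_pos (Or.inr rfl), map_zero, face_toConeSnoc, face_last_zero, prod_zero_eq, map_zero,
      smul_zero]
  · rw [if_neg (by push_neg; exact ⟨h0, hl⟩), map_smul, face_toConeSnoc, hRa,
      Fin.coe_castSucc]

lemma comm_chain (k ℓ : ℕ) :
    (demcD (coneGraph A) (k + 1) (ℓ + 1)) ∘ₗ (chainEquiv A (k + 1) ℓ).toLinearMap =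
      (chainEquiv A k ℓ).toLinearMap ∘ₗ
        LinearMap.prodMap (demcD A (k + 1) (ℓ + 1)) (demcD A k ℓ) := by
  refine LinearMap.prod_ext (Finsupp.lhom_ext' fun a => LinearMap.ext_ring ?_)
    (Finsupp.lhom_ext' fun b => LinearMap.ext_ring ?_)
  · simp only [LinearMap.comp_apply, LinearMap.inl_apply, Finsupp.lsingle_apply,
      LinearMap.coe_comp, Function.comp_apply, LinearEquiv.coe_coe, LinearMap.prodMap_apply,
      map_zero]
    rw [chainEquiv_inl, commL]
  · simp only [LinearMap.comp_apply, LinearMap.inr_apply, Finsupp.lsingle_apply,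
      LinearMap.coe_comp, Function.comp_apply, LinearEquiv.coe_coe, LinearMap.prodMap_apply,
      map_zero]
    rw [chainEquiv_inr, commR]

end Comm

section Homology
variable {R M N M' N' M'' N'' : Type*} [CommRing R]
  [AddCommGroup M] [Module R M] [AddCommGroup N] [Module R N]
  [AddCommGroup M'] [Module R M'] [AddCommGroup N'] [Module R N']
  [AddCommGroup M''] [Module R M''] [AddCommGroup N''] [Module R N'']

lemma map_ker_of_comm (e1 : M ≃ₗ[R] N) (e0 : M' ≃ₗ[R] N') (f : M →ₗ[R] M') (g : N →ₗ[R] N')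
    (h : ∀ x, g (e1 x) = e0 (f x)) :
    (LinearMap.ker f).map (e1 : M →ₗ[R] N) = LinearMap.ker g := by
  ext x
  simp only [Submodule.mem_map, LinearMap.mem_ker]
  constructor
  · rintro ⟨y, hy, rfl⟩
    rw [LinearEquiv.coe_coe, h y, hy, map_zero]
  · intro hx
    refine ⟨e1.symm x, ?_, by rw [LinearEquiv.coe_coe, e1.apply_symm_apply]⟩
    have h2 := h (e1.symm x)
    rw [e1.apply_symm_apply, hx] at h2
    exact (LinearEquiv.map_eq_zero_iff e0).1 h2.symm

lemma map_range_of_comm (e2 : M'' ≃ₗ[R] N'') (e1 : M ≃ₗ[R] N) (g : M'' →ₗ[R] M)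
    (g' : N'' →ₗ[R] N) (h : ∀ x, g' (e2 x) = e1 (g x)) :
    (LinearMap.range g).map (e1 : M →ₗ[R] N) = LinearMap.range g' := by
  ext x
  simp only [Submodule.mem_map, LinearMap.mem_range]
  constructor
  · rintro ⟨y, ⟨z, rfl⟩, rfl⟩
    exact ⟨e2 z, (h z).trans (by rw [LinearEquiv.coe_coe])⟩
  · rintro ⟨z, rfl⟩
    exact ⟨g (e2.symm z), ⟨_, rfl⟩, by rw [LinearEquiv.coe_coe, ← h (e2.symm z),
      e2.apply_symm_apply]⟩

/-- transporting a subquotient along a linear equivalence -/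
noncomputable def quotIso (e : M ≃ₗ[R] N) (p : Submodule R M) (q : Submodule R N)
    (r : Submodule R M) (s : Submodule R N)
    (hpq : p.map (e : M →ₗ[R] N) = q) (hrs : r.map (e : M →ₗ[R] N) = s) :
    (p ⧸ (Submodule.comap p.subtype r)) ≃ₗ[R] (q ⧸ (Submodule.comap q.subtype s)) := by
  refine Submodule.Quotient.equiv _ _ (LinearEquiv.ofSubmodules e p q hpq) ?_
  ext x
  simp only [Submodule.mem_map, Submodule.mem_comap, Submodule.subtype_apply]
  constructor
  · rintro ⟨y, hy, rfl⟩
    rw [← hrs]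
    refine ⟨↑y, hy, ?_⟩
    rw [LinearEquiv.coe_coe, ← LinearEquiv.ofSubmodules_apply e hpq y]; rfl
  · intro hx
    rw [← hrs] at hx
    obtain ⟨m, hm, hme⟩ := hx
    rw [LinearEquiv.coe_coe] at hme
    have hmp : m ∈ p := by
      have hxq : (x : N) ∈ Submodule.map (e : M →ₗ[R] N) p := by rw [hpq]; exact x.2
      obtain ⟨y', hy'p, hy'e⟩ := hxq
      rw [LinearEquiv.coe_coe] at hy'e
      have : y' = m := e.injective (hy'e.trans hme.symm)
      exact this ▸ hy'p
    refine ⟨⟨m, hmp⟩, hm, ?_⟩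
    apply Subtype.ext
    show e m = _
    exact hme

/-- quotient of a product by a product -/
noncomputable def quotientProdEquiv (p : Submodule R M) (q : Submodule R N) :
    ((M × N) ⧸ (p.prod q)) ≃ₗ[R] (M ⧸ p) × (N ⧸ q) := by
  refine (Submodule.quotEquivOfEq _ _ ?_).trans
    (LinearMap.quotKerEquivOfSurjective ((p.mkQ).prodMap (q.mkQ)) ?_)
  · rw [LinearMap.ker_prodMap, Submodule.ker_mkQ, Submodule.ker_mkQ]
  · rintro ⟨a, b⟩
    obtain ⟨a', rfl⟩ := Submodule.mkQ_surjective p a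
    obtain ⟨b', rfl⟩ := Submodule.mkQ_surjective q b
    exact ⟨(a', b'), rfl⟩

/-- the inclusion of a product of submodules is a product of inclusions -/
def prodSubEquiv (p : Submodule R M) (q : Submodule R N) :
    ↥(p.prod q) ≃ₗ[R] (↥p × ↥q) where
  toFun x := (⟨x.1.1, x.2.1⟩, ⟨x.1.2, x.2.2⟩)
  invFun y := ⟨(y.1.1, y.2.1), ⟨y.1.2, y.2.2⟩⟩
  map_add' x y := rfl
  map_smul' c x := rfl
  left_inv x := rfl
  right_inv y := rfl

/-- the subquotient of a product pair is the product of the subquotients -/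
noncomputable def prodQuotEquiv (p : Submodule R M) (q : Submodule R N)
    (r : Submodule R M) (s : Submodule R N) :
    ((p.prod q) ⧸ (Submodule.comap (p.prod q).subtype (r.prod s))) ≃ₗ[R]
      ((p ⧸ (Submodule.comap p.subtype r)) × (q ⧸ (Submodule.comap q.subtype s))) := by
  refine (Submodule.Quotient.equiv _
    ((Submodule.comap p.subtype r).prod (Submodule.comap q.subtype s)) (prodSubEquiv p q) ?_).trans
    (quotientProdEquiv _ _)
  ext ⟨a, b⟩
  simp only [Submodule.mem_map, Submodule.mem_comap, Submodule.subtype_apply,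
    Submodule.mem_prod]
  constructor
  · rintro ⟨y, hy, heq⟩
    have ha : (y : M × N).1 = ↑a := congrArg (fun z => (z.1 : M)) heq
    have hb : (y : M × N).2 = ↑b := congrArg (fun z => (z.2 : N)) heq
    exact ⟨ha ▸ hy.1, hb ▸ hy.2⟩
  · rintro ⟨ha, hb⟩
    exact ⟨⟨(↑a, ↑b), ⟨a.2, b.2⟩⟩, ⟨ha, hb⟩, rfl⟩

end Homology

section Main
variable {V : Type} {A : V → V → Prop}

lemma finsupp_subsingleton {α : Type} (h : IsEmpty α) : Subsingleton (α →₀ ℤ) :=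
  ⟨fun f g => Finsupp.ext fun a => h.elim a⟩

lemma demcGen_zero_len_empty {W : Type} (B : W → W → Prop) (ℓ : ℕ) :
    IsEmpty (demcGen B 0 (ℓ + 1)) := by
  rw [isEmpty_subtype]
  rintro x ⟨-, -, hlen⟩
  have : dlen B x = 0 := by simp [dlen]
  omega

lemma demcGen_pos_zero_empty {W : Type} (B : W → W → Prop) (k : ℕ) :
    IsEmpty (demcGen B (k + 1) 0) := by
  rw [isEmpty_subtype]
  rintro x ⟨hinj, hreach, hlen⟩
  have h1 : 1 ≤ ddist B (x (Fin.castSucc 0)) (x (Fin.succ 0)) := by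
    refine one_le_ddist (hreach 0) fun hc => ?_
    have := hinj hc
    exact absurd (congrArg Fin.val this) (by simp)
  have h2 : ddist B (x (Fin.castSucc 0)) (x (Fin.succ 0)) ≤ dlen B x :=
    Finset.single_le_sum (f := fun i : Fin (k + 1) => ddist B (x i.castSucc) (x i.succ))
      (fun _ _ => Nat.zero_le _) (Finset.mem_univ 0)
  omega

lemma ker_eq_top_of_subsingleton {M N : Type} [AddCommGroup M] [Module ℤ M] [AddCommGroup N]
    [Module ℤ N] (f : M →ₗ[ℤ] N) (h : Subsingleton N) : LinearMap.ker f = ⊤ :=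
  eq_top_iff.2 fun x _ => by
    rw [LinearMap.mem_ker]
    exact Subsingleton.elim _ _

lemma range_eq_bot_of_subsingleton {M N : Type} [AddCommGroup M] [Module ℤ M] [AddCommGroup N]
    [Module ℤ N] (f : M →ₗ[ℤ] N) (h : Subsingleton M) : LinearMap.range f = ⊥ := by
  rw [LinearMap.range_eq_bot]
  apply LinearMap.ext
  intro x
  rw [Subsingleton.elim x 0, map_zero]
  rfl

lemma prod_top_top {R M N : Type*} [CommRing R] [AddCommGroup M] [Module R M] [AddCommGroup N]
    [Module R N] : (⊤ : Submodule R M).prod (⊤ : Submodule R N) = ⊤ := by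
  ext; simp

lemma range_prodMap {R M N M' N' : Type*} [CommRing R] [AddCommGroup M] [Module R M]
    [AddCommGroup N] [Module R N] [AddCommGroup M'] [Module R M'] [AddCommGroup N'] [Module R N']
    (f : M →ₗ[R] M') (g : N →ₗ[R] N') :
    LinearMap.range (f.prodMap g) = (LinearMap.range f).prod (LinearMap.range g) := by
  ext ⟨a, b⟩
  simp only [LinearMap.mem_range, Submodule.mem_prod, Prod.ext_iff, LinearMap.prodMap_apply]
  constructor
  · rintro ⟨⟨m, n⟩, hm, hn⟩
    exact ⟨⟨m, hm⟩, ⟨n, hn⟩⟩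
  · rintro ⟨⟨m, hm⟩, ⟨n, hn⟩⟩
    exact ⟨(m, n), hm, hn⟩

lemma subsingleton_dEMH {W : Type} (B : W → W → Prop) (k ℓ : ℕ)
    (h : Subsingleton (dEMC B k ℓ)) : Subsingleton (dEMH B k ℓ) := by
  haveI : Subsingleton ↥(demcCycles B k ℓ) := ⟨fun a b => Subtype.ext (Subsingleton.elim _ _)⟩
  constructor
  intro a b
  obtain ⟨x, rfl⟩ := Submodule.mkQ_surjective _ a
  obtain ⟨y, rfl⟩ := Submodule.mkQ_surjective _ b
  exact congrArg _ (Subsingleton.elim x y)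

/-- Part 2 of the theorem. -/
lemma part2 (k ℓ : ℕ) :
    Nonempty (dEMH (coneGraph A) (k + 1) (ℓ + 1) ≃ₗ[ℤ]
      dEMH A (k + 1) (ℓ + 1) × dEMH A k ℓ) := by
  have hcomm1 : ∀ x, demcD (coneGraph A) (k + 1) (ℓ + 1) (chainEquiv A (k + 1) ℓ x) =
      chainEquiv A k ℓ ((LinearMap.prodMap (demcD A (k + 1) (ℓ + 1)) (demcD A k ℓ)) x) :=
    fun x => LinearMap.congr_fun (comm_chain k ℓ) x
  have hrs : Submodule.map (chainEquiv A k ℓ : _ →ₗ[ℤ] dEMC (coneGraph A) (k + 1) (ℓ + 1))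
      ((LinearMap.range (demcD A (k + 1) (ℓ + 1))).prod (LinearMap.range (demcD A k ℓ))) =
      LinearMap.range (demcD (coneGraph A) (k + 1) (ℓ + 1)) := by
    rw [← range_prodMap]
    exact map_range_of_comm (chainEquiv A (k + 1) ℓ) (chainEquiv A k ℓ) _ _ hcomm1
  have hpq : Submodule.map (chainEquiv A k ℓ : _ →ₗ[ℤ] dEMC (coneGraph A) (k + 1) (ℓ + 1))
      ((demcCycles A (k + 1) (ℓ + 1)).prod (demcCycles A k ℓ)) =
      demcCycles (coneGraph A) (k + 1) (ℓ + 1) := by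
    match k with
    | 0 =>
      have hsub1 : Subsingleton (dEMC A 0 (ℓ + 1)) :=
        finsupp_subsingleton (demcGen_zero_len_empty A ℓ)
      have hsub2 : Subsingleton (dEMC (coneGraph A) 0 (ℓ + 1)) :=
        finsupp_subsingleton (demcGen_zero_len_empty (coneGraph A) ℓ)
      show ((LinearMap.ker (demcD A 0 (ℓ + 1))).prod ⊤).map _ = LinearMap.ker
        (demcD (coneGraph A) 0 (ℓ + 1))
      rw [ker_eq_top_of_subsingleton _ hsub1, ker_eq_top_of_subsingleton _ hsub2,
        prod_top_top, Submodule.map_top, LinearEquiv.range]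
    | k' + 1 =>
      show ((LinearMap.ker (demcD A (k' + 1) (ℓ + 1))).prod
        (LinearMap.ker (demcD A k' ℓ))).map _ = LinearMap.ker
        (demcD (coneGraph A) (k' + 1) (ℓ + 1))
      rw [← LinearMap.ker_prodMap]
      exact map_ker_of_comm (chainEquiv A (k' + 1) ℓ) (chainEquiv A k' ℓ) _ _
        (fun x => LinearMap.congr_fun (comm_chain k' ℓ) x)
  exact ⟨((quotIso (chainEquiv A k ℓ) _ _ _ _ hpq hrs).symm).trans
    (prodQuotEquiv _ _ _ _)⟩

end Main

section Final
variable {V : Type} {A : V → V → Prop}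

lemma mem_gen00 {W : Type} {B : W → W → Prop} (x : Fin 1 → W) : x ∈ demcGen B 0 0 :=
  ⟨fun a b _ => by omega, fun i => i.elim0, by simp [dlen]⟩

lemma gen00_bij : Function.Bijective
    (Sum.elim (toCone A 0 0) (fun _ : PUnit.{1} => ⟨fun _ => none, mem_gen00 _⟩) :
      (demcGen A 0 0) ⊕ PUnit.{1} → demcGen (coneGraph A) 0 0) := by
  constructor
  · rintro (a | a) (b | b) hab <;>
      simp only [Sum.elim_inl, Sum.elim_inr, toCone, Subtype.mk_eq_mk] at hab
    · refine congrArg Sum.inl (Subtype.ext (funext fun i => ?_))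
      exact Option.some_injective _ (congrFun hab i)
    · exact absurd (congrFun hab 0) (by simp)
    · exact absurd (congrFun hab 0) (by simp)
    · rfl
  · rintro ⟨x, hx⟩
    cases hv : x 0 with
    | none =>
      refine ⟨Sum.inr PUnit.unit, Subtype.ext (funext fun i => ?_)⟩
      show (none : Option V) = x i
      rw [Fin.fin_one_eq_zero i, hv]
    | some v =>
      refine ⟨Sum.inl ⟨fun _ => v, mem_gen00 _⟩, Subtype.ext (funext fun i => ?_)⟩
      show some v = x i
      rw [Fin.fin_one_eq_zero i, hv]

noncomputable def chain00Equiv (A : V → V → Prop) :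
    dEMC (coneGraph A) 0 0 ≃ₗ[ℤ] dEMC A 0 0 × ℤ :=
  (Finsupp.domLCongr (Equiv.ofBijective _ (gen00_bij (A := A))).symm) ≪≫ₗ
    Finsupp.sumFinsuppLEquivProdFinsupp ℤ ≪≫ₗ
    LinearEquiv.prodCongr (LinearEquiv.refl ℤ (dEMC A 0 0)) (Finsupp.LinearEquiv.finsuppUnique ℤ ℤ PUnit.{1})

/-- quotient by trivial boundaries, in degree (0,0) -/
noncomputable def emhZeroEquiv {W : Type} (B : W → W → Prop)
    (hE : IsEmpty (demcGen B 1 0)) : dEMH B 0 0 ≃ₗ[ℤ] dEMC B 0 0 := by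
  have hsub : Subsingleton (dEMC B 1 0) := finsupp_subsingleton hE
  have h0 : Submodule.comap (demcCycles B 0 0).subtype (LinearMap.range (demcD B 0 0)) = ⊥ := by
    rw [range_eq_bot_of_subsingleton _ hsub, Submodule.comap_bot, Submodule.ker_subtype]
  exact (Submodule.quotEquivOfEqBot _ h0).trans
    (Submodule.topEquiv (R := ℤ) (M := dEMC B 0 0))

lemma part1 : Nonempty (dEMH (coneGraph A) 0 0 ≃ₗ[ℤ] dEMH A 0 0 × ℤ) := by
  refine ⟨(emhZeroEquiv (coneGraph A) (demcGen_pos_zero_empty _ 0)).trans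
    ((chain00Equiv A).trans (LinearEquiv.prodCongr
      (emhZeroEquiv A (demcGen_pos_zero_empty _ 0)).symm (LinearEquiv.refl ℤ ℤ)))⟩

lemma part3 (k : ℕ) : Nonempty (dEMH (coneGraph A) (k + 1) 0 ≃ₗ[ℤ] dEMH A (k + 1) 0) := by
  haveI := subsingleton_dEMH (coneGraph A) (k + 1) 0
    (finsupp_subsingleton (demcGen_pos_zero_empty _ k))
  haveI := subsingleton_dEMH A (k + 1) 0 (finsupp_subsingleton (demcGen_pos_zero_empty _ k))
  exact ⟨LinearEquiv.ofSubsingleton _ _⟩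

lemma part4 (ℓ : ℕ) : Nonempty (dEMH (coneGraph A) 0 (ℓ + 1) ≃ₗ[ℤ] dEMH A 0 (ℓ + 1)) := by
  haveI := subsingleton_dEMH (coneGraph A) 0 (ℓ + 1)
    (finsupp_subsingleton (demcGen_zero_len_empty _ ℓ))
  haveI := subsingleton_dEMH A 0 (ℓ + 1) (finsupp_subsingleton (demcGen_zero_len_empty _ ℓ))
  exact ⟨LinearEquiv.ofSubsingleton _ _⟩

end Final


/-- `EMH_{0,0}(C(G)) ≅ EMH_{0,0}(G) ⊕ ℤ`, and in all other bidegrees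
`EMH_{k,ℓ}(C(G)) ≅ EMH_{k,ℓ}(G) ⊕ EMH_{k-1,ℓ-1}(G)` (where the second summand is zero
if `k = 0` or `ℓ = 0`). -/
theorem emh_cone {V : Type} [Fintype V] (A : V → V → Prop) :
    Nonempty (dEMH (coneGraph A) 0 0 ≃ₗ[ℤ] dEMH A 0 0 × ℤ) ∧
    (∀ k ℓ : ℕ, Nonempty
      (dEMH (coneGraph A) (k + 1) (ℓ + 1) ≃ₗ[ℤ] dEMH A (k + 1) (ℓ + 1) × dEMH A k ℓ)) ∧
    (∀ k : ℕ, 1 ≤ k → Nonempty (dEMH (coneGraph A) k 0 ≃ₗ[ℤ] dEMH A k 0)) ∧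
    (∀ ℓ : ℕ, 1 ≤ ℓ → Nonempty (dEMH (coneGraph A) 0 ℓ ≃ₗ[ℤ] dEMH A 0 ℓ)) := by
  refine ⟨part1, fun k ℓ => part2 k ℓ, fun k hk => ?_, fun ℓ hℓ => ?_⟩
  · obtain ⟨k', rfl⟩ : ∃ k', k = k' + 1 := ⟨k - 1, by omega⟩
    exact part3 k'
  · obtain ⟨ℓ', rfl⟩ : ∃ ℓ', ℓ = ℓ' + 1 := ⟨ℓ - 1, by omega⟩
    exact part4 ℓ'
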